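/- Let p be prime, q = p^r, l < r, and a an integer with 0 ≤ a < q and a + p^l < q. Then for every b with 0 ≤ b ≤ q-1: C(b, a + p^l) + ∑_{u ≡ 0 (mod p^l), max(a-b,0) ≤ u ≤ q-1-b} C(u+b, a) ≡ C(b + w p^l, a + p^l) (mod p), where w is the smallest nonnegative integer with b + w p^l ≥ q; consequently the sum is ≡ -C(b, a+p^l) (mod p) since C(b + w p^l, a + p^l) ≡ 0 (mod p). -/

import Mathlib

open Finset

private lemma key_van (p n s k : ℕ) (hp : p.Prime) (hs : s < k) (hk : k < p ^ n) :
    (((p ^ n + s).choose k : ZMod p)) = 0 := by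
  rw [Nat.add_choose_eq]
  push_cast
  apply Finset.sum_eq_zero
  intro ij hij
  rw [Finset.HasAntidiagonal.mem_antidiagonal] at hij
  by_cases h1 : ij.1 = 0
  · have h2 : ij.2 = k := by omega
    rw [h2, Nat.choose_eq_zero_of_lt hs]
    simp
  · have h2 : ij.1 ≠ p ^ n := by omega
    have hdvd : p ∣ (p ^ n).choose ij.1 := Nat.Prime.dvd_choose_pow hp h1 h2
    rw [(ZMod.natCast_eq_zero_iff _ _).mpr hdvd, zero_mul]

private lemma key_step (p l y m : ℕ) (hp : p.Prime) :
    (((y + p ^ l).choose (m + p ^ l) : ZMod p)) =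
      (y.choose m : ZMod p) + (y.choose (m + p ^ l) : ZMod p) := by
  have h0 : (0 : ℕ) < p ^ l := pow_pos hp.pos l
  rw [add_comm y, Nat.add_choose_eq]
  push_cast
  have hne : ((p ^ l, m) : ℕ × ℕ) ≠ (0, m + p ^ l) := by
    intro h
    rw [Prod.ext_iff] at h
    simp only at h
    omega
  have hsub : ({(p ^ l, m), (0, m + p ^ l)} : Finset (ℕ × ℕ)) ⊆
      Finset.HasAntidiagonal.antidiagonal (m + p ^ l) := by
    intro x hx
    simp only [Finset.mem_insert, Finset.mem_singleton] at hx
    rcases hx with rfl | rfl <;> simp [Finset.HasAntidiagonal.mem_antidiagonal, add_comm]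
  have hzero : ∀ x ∈ Finset.HasAntidiagonal.antidiagonal (m + p ^ l),
      x ∉ ({(p ^ l, m), (0, m + p ^ l)} : Finset (ℕ × ℕ)) →
      ((p ^ l).choose x.1 : ZMod p) * (y.choose x.2 : ZMod p) = 0 := by
    intro x hx hxs
    rw [Finset.HasAntidiagonal.mem_antidiagonal] at hx
    simp only [Finset.mem_insert, Finset.mem_singleton, Prod.ext_iff] at hxs
    push_neg at hxs
    have h1 : x.1 ≠ 0 := by
      intro h; exact absurd (by omega : x.2 = m + p ^ l) (hxs.2 h)
    have h2 : x.1 ≠ p ^ l := by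
      intro h; exact absurd (by omega : x.2 = m) (hxs.1 h)
    have hdvd : p ∣ (p ^ l).choose x.1 := Nat.Prime.dvd_choose_pow hp h1 h2
    rw [(ZMod.natCast_eq_zero_iff _ _).mpr hdvd, zero_mul]
  rw [← Finset.sum_subset hsub hzero, Finset.sum_pair hne]
  simp [Nat.choose_self, Nat.choose_zero_right, add_comm]

private lemma key_ind (p l a b : ℕ) (hp : p.Prime) (w : ℕ) :
    (((b + w * p ^ l).choose (a + p ^ l) : ZMod p)) =
      (b.choose (a + p ^ l) : ZMod p) +
        ∑ j ∈ Finset.range w, ((b + j * p ^ l).choose a : ZMod p) := by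
  induction w with
  | zero => simp
  | succ w ih =>
      have h : b + (w + 1) * p ^ l = (b + w * p ^ l) + p ^ l := by ring
      rw [h, key_step p l (b + w * p ^ l) a hp, Finset.sum_range_succ, ih]
      ring

theorem stmt_17 (p r l : ℕ) (hp : p.Prime) (hl : l < r) (q : ℕ) (hq : q = p ^ r)
    (a : ℕ) (ha : a < q) (hapl : a + p ^ l < q) (b : ℕ) (hb : b ≤ q - 1)
    (w : ℕ) (hw : q ≤ b + w * p ^ l) (hwmin : ∀ w' : ℕ, w' < w → b + w' * p ^ l < q) :
    ((b.choose (a + p ^ l) : ℤ) +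
        ∑ u ∈ (Finset.Icc (a - b) (q - 1 - b)).filter (fun u => p ^ l ∣ u),
          ((u + b).choose a : ℤ))
      ≡ ((b + w * p ^ l).choose (a + p ^ l) : ℤ) [ZMOD (p : ℤ)] ∧
    (∑ u ∈ (Finset.Icc (a - b) (q - 1 - b)).filter (fun u => p ^ l ∣ u),
        ((u + b).choose a : ℤ))
      ≡ -(b.choose (a + p ^ l) : ℤ) [ZMOD (p : ℤ)] := by
  have hppos : 0 < p := hp.pos
  have hplpos : 0 < p ^ l := pow_pos hppos l
  have hq1 : 1 ≤ q := by rw [hq]; exact Nat.one_le_pow _ _ hppos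
  have hbq : b < q := by omega
  -- the filtered set is the image of a filtered range
  have himg : (Finset.Icc (a - b) (q - 1 - b)).filter (fun u => p ^ l ∣ u) =
      ((Finset.range w).filter (fun j => a - b ≤ j * p ^ l)).image (fun j => j * p ^ l) := by
    ext u
    simp only [Finset.mem_filter, Finset.mem_Icc, Finset.mem_image, Finset.mem_range]
    constructor
    · rintro ⟨⟨h1, h2⟩, j, rfl⟩
      have hc : p ^ l * j = j * p ^ l := mul_comm _ _
      refine ⟨j, ⟨?_, by omega⟩, by omega⟩
      by_contra hjw
      push_neg at hjw
      have hmul : w * p ^ l ≤ j * p ^ l := Nat.mul_le_mul_right _ hjw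
      omega
    · rintro ⟨j, ⟨hjw, hab⟩, rfl⟩
      have := hwmin j hjw
      exact ⟨⟨hab, by omega⟩, ⟨j, mul_comm _ _⟩⟩
  have hinj : Set.InjOn (fun j => j * p ^ l)
      ↑((Finset.range w).filter (fun j => a - b ≤ j * p ^ l)) := by
    intro x _ y _ h
    exact Nat.eq_of_mul_eq_mul_right hplpos h
  have hsum_nat : ∑ u ∈ (Finset.Icc (a - b) (q - 1 - b)).filter (fun u => p ^ l ∣ u),
      (u + b).choose a = ∑ j ∈ Finset.range w, (b + j * p ^ l).choose a := by
    rw [himg, Finset.sum_image hinj]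
    have hz : ∀ x ∈ Finset.range w,
        x ∉ (Finset.range w).filter (fun j => a - b ≤ j * p ^ l) →
        (x * p ^ l + b).choose a = 0 := by
      intro x hx hxf
      simp only [Finset.mem_filter, not_and, not_le] at hxf
      have hlt : x * p ^ l < a - b := hxf hx
      exact Nat.choose_eq_zero_of_lt (by omega)
    rw [Finset.sum_subset (Finset.filter_subset _ _) hz]
    exact Finset.sum_congr rfl (fun j _ => by rw [add_comm])
  have hsumZ : (∑ u ∈ (Finset.Icc (a - b) (q - 1 - b)).filter (fun u => p ^ l ∣ u),
      ((u + b).choose a : ZMod p)) = ∑ j ∈ Finset.range w, ((b + j * p ^ l).choose a : ZMod p) := by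
    have := congrArg (fun n : ℕ => (n : ZMod p)) hsum_nat
    push_cast at this
    exact this
  -- vanishing of the top binomial coefficient mod p
  have hw1 : 1 ≤ w := by
    rcases Nat.eq_zero_or_pos w with h | h
    · subst h; simp at hw; omega
    · exact h
  have hlt : b + (w - 1) * p ^ l < q := hwmin (w - 1) (by omega)
  have hwsplit : w * p ^ l = (w - 1) * p ^ l + p ^ l := by
    cases w with
    | zero => omega
    | succ n => simp [Nat.succ_mul]
  have hrep : b + w * p ^ l = p ^ r + (b + w * p ^ l - q) := by rw [← hq]; omega
  have hvan : (((b + w * p ^ l).choose (a + p ^ l) : ZMod p)) = 0 := by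
    rw [hrep]
    exact key_van p r _ (a + p ^ l) hp (by omega) (by omega)
  have hkey := key_ind p l a b hp w
  constructor
  · rw [← ZMod.intCast_eq_intCast_iff]
    push_cast
    rw [hsumZ, hkey]
  · rw [← ZMod.intCast_eq_intCast_iff]
    push_cast
    rw [hsumZ]
    rw [hvan] at hkey
    linear_combination -hkey
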